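/- For any positive integers s and t, there exists q = q(s,t) such that every bipartite graph G containing a matching of size q contains either an induced matching of size s (i.e., s edges pairwise at distance at least 2) or an induced complete bipartite subgraph K_{t,t}. -/

import Mathlib

open Finset

/-- Greedy Ramsey sequence lemma: from a large set we can extract a strictly increasing
sequence where each element has a uniform "color" towards all later elements. -/
lemma ramsey_seq {α : Type} [Fintype α] [DecidableEq α] [Nonempty α] (χ : ℕ → ℕ → α) :
    ∀ (n : ℕ) (S : Finset ℕ), (Fintype.card α + 1) ^ n ≤ S.card →
    ∃ (f : Fin n → ℕ) (c : Fin n → α), StrictMono f ∧ (∀ i, f i ∈ S) ∧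
      ∀ i j : Fin n, i < j → χ (f i) (f j) = c i := by
  intro n
  induction n with
  | zero =>
    intro S _
    exact ⟨Fin.elim0, Fin.elim0, fun i => i.elim0, fun i => i.elim0, fun i => i.elim0⟩
  | succ n ih =>
    intro S hS
    have hSpos : 0 < S.card := lt_of_lt_of_le (pow_pos (Nat.succ_pos _) _) hS
    have hSne : S.Nonempty := card_pos.mp hSpos
    set x := S.min' hSne with hx
    have hxS : x ∈ S := S.min'_mem hSne
    set T := S.erase x with hT
    have hTcard : T.card = S.card - 1 := card_erase_of_mem hxS
    set k := Fintype.card α with hk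
    have hmul : (Finset.univ : Finset α).card * (k + 1) ^ n ≤ T.card := by
      rw [card_univ, hTcard, ← hk]
      have h1 : (k + 1) ^ (n + 1) = k * (k + 1) ^ n + (k + 1) ^ n := by ring
      have h2 : 1 ≤ (k + 1) ^ n := Nat.one_le_pow _ _ (Nat.succ_pos _)
      rw [h1] at hS
      set P := (k + 1) ^ n
      set Q := k * P
      omega
    obtain ⟨a, -, ha⟩ := exists_le_card_fiber_of_mul_le_card_of_maps_to
      (f := χ x) (s := T) (t := (Finset.univ : Finset α))
      (fun y _ => mem_univ _) univ_nonempty hmul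
    obtain ⟨f', c', hmono', hmem', hcol'⟩ := ih ({y ∈ T | χ x y = a}) ha
    have hmemT : ∀ i, f' i ∈ T := fun i => (mem_filter.mp (hmem' i)).1
    have hxlt : ∀ i, x < f' i := by
      intro i
      have h1 : f' i ∈ S := mem_of_mem_erase (hmemT i)
      have h2 : f' i ≠ x := ne_of_mem_erase (hmemT i)
      exact lt_of_le_of_ne (S.min'_le _ h1) (Ne.symm h2)
    refine ⟨Fin.cases x f', Fin.cases a c', ?_, ?_, ?_⟩
    · intro i j hij
      induction j using Fin.cases with
      | zero => exact absurd hij (Nat.not_lt_zero _)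
      | succ j =>
        induction i using Fin.cases with
        | zero => simpa using hxlt j
        | succ i =>
          simp only [Fin.cases_succ]
          exact hmono' (by simpa [Fin.succ_lt_succ_iff] using hij)
    · intro i
      induction i using Fin.cases with
      | zero => simpa using hxS
      | succ i => simpa using mem_of_mem_erase (hmemT i)
    · intro i j hij
      induction j using Fin.cases with
      | zero => exact absurd hij (Nat.not_lt_zero _)
      | succ j =>
        induction i using Fin.cases with
        | zero =>
          simpa using (mem_filter.mp (hmem' j)).2
        | succ i =>
          simp only [Fin.cases_succ]
          exact hcol' i j (by simpa [Fin.succ_lt_succ_iff] using hij)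

theorem bipartite_matching_ramsey (s t : ℕ) (hs : 0 < s) (ht : 0 < t) :
    ∃ q : ℕ, ∀ (A B : Type) (E : A → B → Prop),
      (∃ (f : Fin q ↪ A) (g : Fin q ↪ B), ∀ i, E (f i) (g i)) →
      ((∃ (f : Fin s ↪ A) (g : Fin s ↪ B), ∀ i j, E (f i) (g j) ↔ i = j) ∨
       (∃ (f : Fin t ↪ A) (g : Fin t ↪ B), ∀ i j, E (f i) (g j))) := by
  classical
  set nn := max s (2 * t) with hnn
  set m := 4 * nn with hm
  refine ⟨5 ^ m, ?_⟩
  set q := 5 ^ m with hq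
  intro A B E hM
  obtain ⟨f, g, hfg⟩ := hM
  have hq1 : 1 ≤ q := Nat.one_le_pow _ _ (by norm_num)
  -- the coloring
  set χ : ℕ → ℕ → Bool × Bool := fun i j =>
    if hi : i < q then
      if hj : j < q then
        (decide (E (f ⟨i, hi⟩) (g ⟨j, hj⟩)), decide (E (f ⟨j, hj⟩) (g ⟨i, hi⟩)))
      else (false, false)
    else (false, false) with hχ
  have hcard : (Fintype.card (Bool × Bool) + 1) ^ m ≤ (Finset.range q).card := by
    simp [hq]
  obtain ⟨u, c, humono, humem, hucol⟩ := ramsey_seq χ m (Finset.range q) hcard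
  -- pigeonhole on colors
  have hmul2 : (Finset.univ : Finset (Bool × Bool)).card * nn ≤
      (Finset.univ : Finset (Fin m)).card := by
    simp [hm]
  obtain ⟨a, -, ha⟩ := exists_le_card_fiber_of_mul_le_card_of_maps_to
    (f := c) (s := (Finset.univ : Finset (Fin m))) (t := (Finset.univ : Finset (Bool × Bool)))
    (fun y _ => mem_univ _) univ_nonempty hmul2
  set Fs := {i ∈ (Finset.univ : Finset (Fin m)) | c i = a} with hFs
  have hFscard : nn ≤ Fs.card := ha
  set e : Fin nn ↪o Fin m := Fs.orderEmbOfCardLe hFscard with he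
  have hce : ∀ i, c (e i) = a := by
    intro i
    have := Fs.orderEmbOfCardLe_mem hFscard i
    exact (mem_filter.mp this).2
  have hult : ∀ i : Fin nn, u (e i) < q := by
    intro i; have := humem (e i); simpa [Finset.mem_range] using this
  set v : Fin nn → Fin q := fun i => ⟨u (e i), hult i⟩ with hv
  have hvmono : StrictMono v := by
    intro i j hij
    exact humono (e.strictMono hij)
  have hvinj : Function.Injective v := hvmono.injective
  -- key color facts
  have key : ∀ i j : Fin nn, i < j →
      (E (f (v i)) (g (v j)) ↔ a.1 = true) ∧ (E (f (v j)) (g (v i)) ↔ a.2 = true) := by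
    intro i j hij
    have h1 : χ (u (e i)) (u (e j)) = a := by
      rw [hucol (e i) (e j) (e.strictMono hij)]; exact hce i
    rw [hχ] at h1
    simp only [hult i, hult j, dif_pos] at h1
    constructor
    · rw [← decide_eq_true_eq (p := E (f (v i)) (g (v j)))]
      constructor <;> intro h2 <;> rw [← h1] at * <;> simpa using h2
    · rw [← decide_eq_true_eq (p := E (f (v j)) (g (v i)))]
      constructor <;> intro h2 <;> rw [← h1] at * <;> simpa using h2
  have hsnn : s ≤ nn := le_max_left _ _
  have h2t : 2 * t ≤ nn := le_max_right _ _
  obtain ⟨⟨⟩ | ⟨⟩, ⟨⟩ | ⟨⟩⟩ := a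
  -- case (false, false): induced matching
  · left
    refine ⟨⟨fun i => f (v (Fin.castLE hsnn i)), ?_⟩,
            ⟨fun i => g (v (Fin.castLE hsnn i)), ?_⟩, ?_⟩
    · intro i j hij
      exact (Fin.castLE_injective hsnn) (hvinj (f.injective hij))
    · intro i j hij
      exact (Fin.castLE_injective hsnn) (hvinj (g.injective hij))
    · intro i j
      show E (f (v (Fin.castLE hsnn i))) (g (v (Fin.castLE hsnn j))) ↔ i = j
      constructor
      · intro hE
        by_contra hne
        rcases lt_or_gt_of_ne (fun h : Fin.castLE hsnn i = Fin.castLE hsnn j =>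
          hne ((Fin.castLE_injective hsnn) h)) with h | h
        · exact absurd ((key _ _ h).1.mp hE) (by simp)
        · exact absurd ((key _ _ h).2.mp hE) (by simp)
      · rintro rfl; exact hfg _
  -- case (false, true)
  · right
    have hidx1 : ∀ i : Fin t, (i : ℕ) < nn := fun i => lt_of_lt_of_le i.2 (by omega)
    have hidx2 : ∀ i : Fin t, t + (i : ℕ) < nn := fun i => by have := i.2; omega
    refine ⟨⟨fun i => f (v ⟨t + (i : ℕ), hidx2 i⟩), ?_⟩,
            ⟨fun i => g (v ⟨(i : ℕ), hidx1 i⟩), ?_⟩, ?_⟩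
    · intro i j hij
      have := hvinj (f.injective hij)
      have := congrArg Fin.val this
      simp at this; exact Fin.ext (by omega)
    · intro i j hij
      have := hvinj (g.injective hij)
      have := congrArg Fin.val this
      simp at this; exact Fin.ext this
    · intro i j
      have hlt : (⟨(j : ℕ), hidx1 j⟩ : Fin nn) < ⟨t + (i : ℕ), hidx2 i⟩ := by
        simp [Fin.lt_def]; omega
      exact (key _ _ hlt).2.mpr rfl
  -- case (true, false)
  · right
    have hidx1 : ∀ i : Fin t, (i : ℕ) < nn := fun i => lt_of_lt_of_le i.2 (by omega)
    have hidx2 : ∀ i : Fin t, t + (i : ℕ) < nn := fun i => by have := i.2; omega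
    refine ⟨⟨fun i => f (v ⟨(i : ℕ), hidx1 i⟩), ?_⟩,
            ⟨fun i => g (v ⟨t + (i : ℕ), hidx2 i⟩), ?_⟩, ?_⟩
    · intro i j hij
      have := hvinj (f.injective hij)
      have := congrArg Fin.val this
      simp at this; exact Fin.ext this
    · intro i j hij
      have := hvinj (g.injective hij)
      have := congrArg Fin.val this
      simp at this; exact Fin.ext (by omega)
    · intro i j
      have hlt : (⟨(i : ℕ), hidx1 i⟩ : Fin nn) < ⟨t + (j : ℕ), hidx2 j⟩ := by
        simp [Fin.lt_def]; omega
      exact (key _ _ hlt).1.mpr rfl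
  -- case (true, true): K_{t,t}
  · right
    have htnn : t ≤ nn := le_trans (by omega) h2t
    refine ⟨⟨fun i => f (v (Fin.castLE htnn i)), ?_⟩,
            ⟨fun i => g (v (Fin.castLE htnn i)), ?_⟩, ?_⟩
    · intro i j hij
      exact (Fin.castLE_injective htnn) (hvinj (f.injective hij))
    · intro i j hij
      exact (Fin.castLE_injective htnn) (hvinj (g.injective hij))
    · intro i j
      rcases lt_trichotomy (Fin.castLE htnn i) (Fin.castLE htnn j) with h | h | h
      · exact (key _ _ h).1.mpr rfl
      · show E (f (v (Fin.castLE htnn i))) (g (v (Fin.castLE htnn j))); rw [h]; exact hfg _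
      · exact (key _ _ h).2.mpr rfl
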